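/- Let m be a positive integer and let F ⊆ ℝ^{2m} be the set of tuples (y_1,…,y_m, z_1,…,z_m) with 1 ≤ y_i ≤ 2 and 1 ≤ z_i ≤ 2 for every i and Σ_{i=1}^m z_i² = Σ_{i=1}^m y_i·z_i. Suppose (y_1,…,y_m, z_1,…,z_m) ∈ F attains the maximum of Σ_{i=1}^m z_i²·y_i·e^{−z_i−y_i} over F. Then for every 1 ≤ i ≤ m, exactly one of the following holds: y_i = z_i = 3/2, or y_i < 3/2 < z_i, or z_i ≤ 3/2 < y_i. -/

import Mathlib

noncomputable def phiA (c t : ℝ) : ℝ := (t^3 - c*t) * Real.exp (c/t - 2*t)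

lemma phiA_hasDerivAt (c t : ℝ) (ht : t ≠ 0) :
    HasDerivAt (phiA c)
      ((3*t^2 - c + (t^3 - c*t) * (-(c/t^2) - 2)) * Real.exp (c/t - 2*t)) t := by
  have hp : HasDerivAt (fun s : ℝ => s^3 - c*s) (3*t^2 - c) t := by
    have h1 : HasDerivAt (fun s : ℝ => s^3) (3*t^2) t := by
      simpa using hasDerivAt_pow 3 t
    have h2 : HasDerivAt (fun s : ℝ => c*s) c t := by
      simpa using (hasDerivAt_id t).const_mul c
    exact h1.sub h2
  have hq : HasDerivAt (fun s : ℝ => c/s - 2*s) (-(c/t^2) - 2) t := by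
    have h1 : HasDerivAt (fun s : ℝ => c/s) (-(c/t^2)) t := by
      have h := (hasDerivAt_inv ht).const_mul c
      have he : c * -(t^2)⁻¹ = -(c/t^2) := by field_simp
      simpa [div_eq_mul_inv, he] using h
    have h2 : HasDerivAt (fun s : ℝ => 2*s) 2 t := by
      simpa using (hasDerivAt_id t).const_mul 2
    exact h1.sub h2
  have h := hp.mul hq.exp
  have h' : HasDerivAt (fun s : ℝ => (s^3 - c*s) * Real.exp (c/s - 2*s))
      ((3*t^2 - c + (t^3 - c*t) * (-(c/t^2) - 2)) * Real.exp (c/t - 2*t)) t := by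
    exact h.congr_deriv (by ring)
  exact h'

lemma phiA_lt_of_pos (c a b : ℝ) (ha : 0 < a) (hab : a < b)
    (hB : ∀ t ∈ Set.Icc a b, 0 < 3*t^2 - c + (t^3 - c*t) * (-(c/t^2) - 2)) :
    phiA c a < phiA c b := by
  have hpos : ∀ t ∈ Set.Icc a b, (0:ℝ) < t := fun t ht => lt_of_lt_of_le ha ht.1
  have hmono : StrictMonoOn (phiA c) (Set.Icc a b) := by
    apply strictMonoOn_of_deriv_pos (convex_Icc a b)
    · intro t ht
      exact (phiA_hasDerivAt c t (ne_of_gt (hpos t ht))).continuousAt.continuousWithinAt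
    · intro t ht
      rw [interior_Icc] at ht
      have ht' : t ∈ Set.Icc a b := ⟨ht.1.le, ht.2.le⟩
      rw [(phiA_hasDerivAt c t (ne_of_gt (hpos t ht'))).deriv]
      exact mul_pos (hB t ht') (Real.exp_pos _)
  exact hmono (Set.left_mem_Icc.mpr hab.le) (Set.right_mem_Icc.mpr hab.le) hab

lemma phiA_lt_of_neg (c a b : ℝ) (ha : 0 < a) (hab : a < b)
    (hB : ∀ t ∈ Set.Icc a b, 3*t^2 - c + (t^3 - c*t) * (-(c/t^2) - 2) < 0) :
    phiA c b < phiA c a := by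
  have hpos : ∀ t ∈ Set.Icc a b, (0:ℝ) < t := fun t ht => lt_of_lt_of_le ha ht.1
  have hmono : StrictAntiOn (phiA c) (Set.Icc a b) := by
    apply strictAntiOn_of_deriv_neg (convex_Icc a b)
    · intro t ht
      exact (phiA_hasDerivAt c t (ne_of_gt (hpos t ht))).continuousAt.continuousWithinAt
    · intro t ht
      rw [interior_Icc] at ht
      have ht' : t ∈ Set.Icc a b := ⟨ht.1.le, ht.2.le⟩
      rw [(phiA_hasDerivAt c t (ne_of_gt (hpos t ht'))).deriv]
      exact mul_neg_of_neg_of_pos (hB t ht') (Real.exp_pos _)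
  exact hmono (Set.left_mem_Icc.mpr hab.le) (Set.right_mem_Icc.mpr hab.le) hab

lemma wboundsA (c t y0 z0 : ℝ) (ht : 0 < t) (hy0 : 0 ≤ y0) (hc : c = z0^2 - y0*z0)
    (h1 : z0 ≤ t) (h2 : 0 ≤ t + z0 - y0) :
    y0 ≤ t - c/t ∧ t - c/t ≤ y0 + 2*(t - z0) := by
  have e : t - c/t = (t^2 - c)/t := by field_simp
  constructor
  · rw [e, le_div_iff₀ ht]
    nlinarith [mul_nonneg (sub_nonneg.mpr h1) h2]
  · rw [e, div_le_iff₀ ht]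
    nlinarith [sq_nonneg (t - z0), mul_nonneg hy0 (sub_nonneg.mpr h1)]

lemma wboundsB (c t y0 z0 : ℝ) (ht : 0 < t) (hc : c = z0^2 - y0*z0)
    (h1 : t ≤ z0) (h2 : 0 ≤ t + z0 - y0) (h3 : z0 - t ≤ y0) :
    y0 - 2*(z0 - t) ≤ t - c/t ∧ t - c/t ≤ y0 := by
  have e : t - c/t = (t^2 - c)/t := by field_simp
  constructor
  · rw [e, le_div_iff₀ ht]
    nlinarith [mul_nonneg (sub_nonneg.mpr h1) (sub_nonneg.mpr h3)]
  · rw [e, div_le_iff₀ ht]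
    nlinarith [mul_nonneg (sub_nonneg.mpr h1) h2]

lemma EposA (y0 z0 t w : ℝ) (hy1 : 1 ≤ y0) (hy2 : y0 ≤ 3/2) (hz1 : 1 ≤ z0) (hz2 : z0 ≤ 3/2)
    (hD : 0 < (3/2 - z0) + (3/2 - y0)/2)
    (ht1 : z0 ≤ t) (ht2 : t ≤ z0 + ((3/2 - z0) + (3/2 - y0)/2)/12)
    (hw1 : y0 ≤ w) (hw2 : w ≤ y0 + 2*(t - z0)) :
    0 < (3/2 - t)*(3*w - 2) + (3/2 - w)*(2 - w) := by
  have hw2' : w ≤ 2 := by nlinarith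
  rcases le_or_gt t (3/2) with hct | hct <;> rcases le_or_gt w (3/2) with hcw | hcw
  · nlinarith [mul_nonneg (by linarith : (0:ℝ) ≤ 3/2 - t) (by linarith : (0:ℝ) ≤ 3*w - 3),
      mul_nonneg (by linarith : (0:ℝ) ≤ 3/2 - w) (by linarith : (0:ℝ) ≤ (2 - w) - 1/2)]
  · nlinarith [mul_nonneg (by linarith : (0:ℝ) ≤ 3/2 - t) (by linarith : (0:ℝ) ≤ 3*w - 3),
      mul_nonneg (by linarith : (0:ℝ) ≤ w - 3/2) (by linarith : (0:ℝ) ≤ w - 1)]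
  · nlinarith [mul_nonneg (by linarith : (0:ℝ) ≤ t - 3/2) (by linarith : (0:ℝ) ≤ 6 - 3*w),
      mul_nonneg (by linarith : (0:ℝ) ≤ 3/2 - w) (by linarith : (0:ℝ) ≤ (2 - w) - 1/2)]
  · nlinarith [mul_nonneg (by linarith : (0:ℝ) ≤ t - 3/2) (by linarith : (0:ℝ) ≤ 6 - 3*w),
      mul_nonneg (by linarith : (0:ℝ) ≤ w - 3/2) (by linarith : (0:ℝ) ≤ w - 1)]

lemma EnegB (y0 z0 t w : ℝ) (hy1 : 3/2 ≤ y0) (hy2 : y0 ≤ 2) (hz1 : 3/2 < z0) (hz2 : z0 ≤ 2)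
    (ht1 : z0 - (z0 - 3/2)/4 ≤ t) (ht2 : t ≤ z0)
    (hw1 : y0 - 2*(z0 - t) ≤ w) (hw2 : w ≤ y0) :
    (3/2 - t)*(3*w - 2) + (3/2 - w)*(2 - w) < 0 := by
  have hw1' : 1 ≤ w := by nlinarith
  rcases le_or_gt w (3/2) with hcw | hcw
  · nlinarith [mul_nonneg (by linarith : (0:ℝ) ≤ t - 3/2) (by linarith : (0:ℝ) ≤ 3*w - 3),
      mul_nonneg (by linarith : (0:ℝ) ≤ 3/2 - w) (by linarith : (0:ℝ) ≤ w - 1)]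
  · nlinarith [mul_nonneg (by linarith : (0:ℝ) ≤ t - 3/2) (by linarith : (0:ℝ) ≤ 3*w - 3),
      mul_nonneg (by linarith : (0:ℝ) ≤ w - 3/2) (by linarith : (0:ℝ) ≤ 2 - w)]

lemma no_improve (m : ℕ) (y z : Fin m → ℝ)
    (hy : ∀ i, 1 ≤ y i ∧ y i ≤ 2) (hz : ∀ i, 1 ≤ z i ∧ z i ≤ 2)
    (hsum : ∑ i, (z i) ^ 2 = ∑ i, y i * z i)
    (hmax : ∀ y' z' : Fin m → ℝ, (∀ i, 1 ≤ y' i ∧ y' i ≤ 2) → (∀ i, 1 ≤ z' i ∧ z' i ≤ 2) →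
      (∑ i, (z' i) ^ 2 = ∑ i, y' i * z' i) →
      ∑ i, (z' i) ^ 2 * y' i * Real.exp (-(z' i) - y' i) ≤
        ∑ i, (z i) ^ 2 * y i * Real.exp (-(z i) - y i))
    (i : Fin m) (a' b' : ℝ)
    (ha1 : 1 ≤ a') (ha2 : a' ≤ 2) (hb1 : 1 ≤ b') (hb2 : b' ≤ 2)
    (hcon : b'^2 - a'*b' = (z i)^2 - y i * z i)
    (hlt : (z i)^2 * y i * Real.exp (-(z i) - y i) < b'^2 * a' * Real.exp (-b' - a')) :
    False := by
  classical
  set y' := Function.update y i a' with hy'def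
  set z' := Function.update z i b' with hz'def
  have hy' : ∀ j, 1 ≤ y' j ∧ y' j ≤ 2 := by
    intro j
    by_cases hj : j = i
    · subst hj; simp [hy'def, ha1, ha2]
    · simp [hy'def, Function.update_of_ne hj]; exact hy j
  have hz' : ∀ j, 1 ≤ z' j ∧ z' j ≤ 2 := by
    intro j
    by_cases hj : j = i
    · subst hj; simp [hz'def, hb1, hb2]
    · simp [hz'def, Function.update_of_ne hj]; exact hz j
  have hmem : i ∈ Finset.univ := Finset.mem_univ i
  have key : ∀ f : ℝ → ℝ → ℝ,
      ∑ j, f (y' j) (z' j) = (∑ j, f (y j) (z j)) - f (y i) (z i) + f a' b' := by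
    intro f
    have h1 : ∑ j, f (y' j) (z' j)
        = ∑ j ∈ Finset.univ.erase i, f (y' j) (z' j) + f (y' i) (z' i) :=
      (Finset.sum_erase_add _ _ hmem).symm
    have h2 : ∑ j, f (y j) (z j)
        = ∑ j ∈ Finset.univ.erase i, f (y j) (z j) + f (y i) (z i) :=
      (Finset.sum_erase_add _ _ hmem).symm
    have h3 : ∑ j ∈ Finset.univ.erase i, f (y' j) (z' j)
        = ∑ j ∈ Finset.univ.erase i, f (y j) (z j) := by
      apply Finset.sum_congr rfl
      intro j hj
      have hj' : j ≠ i := (Finset.mem_erase.mp hj).1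
      simp [hy'def, hz'def, Function.update_of_ne hj']
    have h4 : y' i = a' := by simp [hy'def]
    have h5 : z' i = b' := by simp [hz'def]
    rw [h1, h2, h3, h4, h5]; ring
  have hc' : ∑ j, (z' j) ^ 2 = ∑ j, y' j * z' j := by
    have e1 := key (fun a b => b^2)
    have e2 := key (fun a b => a * b)
    rw [e1, e2, hsum]
    nlinarith [hcon]
  have hobj := hmax y' z' hy' hz' hc'
  have e3 := key (fun a b => b^2 * a * Real.exp (-b - a))
  rw [e3] at hobj
  linarith

lemma regionA (m : ℕ) (y z : Fin m → ℝ)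
    (hy : ∀ i, 1 ≤ y i ∧ y i ≤ 2) (hz : ∀ i, 1 ≤ z i ∧ z i ≤ 2)
    (hsum : ∑ i, (z i) ^ 2 = ∑ i, y i * z i)
    (hmax : ∀ y' z' : Fin m → ℝ, (∀ i, 1 ≤ y' i ∧ y' i ≤ 2) → (∀ i, 1 ≤ z' i ∧ z' i ≤ 2) →
      (∑ i, (z' i) ^ 2 = ∑ i, y' i * z' i) →
      ∑ i, (z' i) ^ 2 * y' i * Real.exp (-(z' i) - y' i) ≤
        ∑ i, (z i) ^ 2 * y i * Real.exp (-(z i) - y i))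
    (i : Fin m) (hyA : y i ≤ 3/2) (hzA : z i ≤ 3/2)
    (hD : 0 < (3/2 - z i) + (3/2 - y i)/2) : False := by
  obtain ⟨hy1, hy2⟩ := hy i
  obtain ⟨hz1, hz2⟩ := hz i
  set y0 := y i with hy0def
  set z0 := z i with hz0def
  set c := z0^2 - y0*z0 with hc
  set ε := ((3/2 - z0) + (3/2 - y0)/2)/12 with hε
  have hε0 : 0 < ε := by rw [hε]; linarith
  have hε16 : ε ≤ 1/16 := by rw [hε]; linarith
  set t' := z0 + ε with ht'
  have hwb : ∀ t ∈ Set.Icc z0 t', y0 ≤ t - c/t ∧ t - c/t ≤ y0 + 2*(t - z0) := by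
    rintro t ⟨hta, htb⟩
    exact wboundsA c t y0 z0 (by linarith) (by linarith) hc hta (by linarith)
  have hB : ∀ t ∈ Set.Icc z0 t', 0 < 3*t^2 - c + (t^3 - c*t) * (-(c/t^2) - 2) := by
    rintro t ⟨hta, htb⟩
    have ht0 : 0 < t := by linarith
    obtain ⟨hwa, hwb'⟩ := hwb t ⟨hta, htb⟩
    have hid : 3*t^2 - c + (t^3 - c*t) * (-(c/t^2) - 2)
        = t * ((3/2 - t)*(3*(t - c/t) - 2) + (3/2 - (t - c/t))*(2 - (t - c/t))) := by
      field_simp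
      ring
    rw [hid]
    refine mul_pos ht0 (EposA y0 z0 t (t - c/t) hy1 hyA hz1 hzA hD hta ?_ hwa hwb')
    rw [← hε]; linarith
  have hφ := phiA_lt_of_pos c z0 t' (by linarith) (by linarith) hB
  obtain ⟨ha1', ha2'⟩ := hwb t' ⟨by linarith, le_refl _⟩
  have ht'0 : (0:ℝ) < t' := by rw [ht']; linarith
  have hz00 : z0 ≠ 0 := by intro h; rw [h] at hz1; linarith
  have ht'ne : t' ≠ 0 := ne_of_gt ht'0
  have eq1 : phiA c z0 = z0^2 * y0 * Real.exp (-z0 - y0) := by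
    unfold phiA
    have h1 : z0^3 - c*z0 = z0^2 * y0 := by rw [hc]; ring
    have h2 : c/z0 - 2*z0 = -z0 - y0 := by rw [hc]; field_simp; ring
    rw [h1, h2]
  have eq2 : phiA c t' = t'^2 * (t' - c/t') * Real.exp (-t' - (t' - c/t')) := by
    unfold phiA
    have h1 : t'^3 - c*t' = t'^2 * (t' - c/t') := by field_simp
    have h2 : c/t' - 2*t' = -t' - (t' - c/t') := by ring
    rw [h1, h2]
  refine no_improve m y z hy hz hsum hmax i (t' - c/t') t'
    (by linarith) (by nlinarith) (by rw [ht']; linarith) (by rw [ht']; linarith) ?_ ?_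
  · rw [← hc]
    field_simp
    ring
  · rw [← hy0def, ← hz0def, ← eq1, ← eq2] at *
    exact hφ

lemma regionB (m : ℕ) (y z : Fin m → ℝ)
    (hy : ∀ i, 1 ≤ y i ∧ y i ≤ 2) (hz : ∀ i, 1 ≤ z i ∧ z i ≤ 2)
    (hsum : ∑ i, (z i) ^ 2 = ∑ i, y i * z i)
    (hmax : ∀ y' z' : Fin m → ℝ, (∀ i, 1 ≤ y' i ∧ y' i ≤ 2) → (∀ i, 1 ≤ z' i ∧ z' i ≤ 2) →
      (∑ i, (z' i) ^ 2 = ∑ i, y' i * z' i) →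
      ∑ i, (z' i) ^ 2 * y' i * Real.exp (-(z' i) - y' i) ≤
        ∑ i, (z i) ^ 2 * y i * Real.exp (-(z i) - y i))
    (i : Fin m) (hyB : 3/2 ≤ y i) (hzB : 3/2 < z i) : False := by
  obtain ⟨hy1, hy2⟩ := hy i
  obtain ⟨hz1, hz2⟩ := hz i
  set y0 := y i with hy0def
  set z0 := z i with hz0def
  set c := z0^2 - y0*z0 with hc
  set ε := (z0 - 3/2)/4 with hε
  have hε0 : 0 < ε := by rw [hε]; linarith
  have hε8 : ε ≤ 1/8 := by rw [hε]; linarith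
  set t' := z0 - ε with ht'
  have hwb : ∀ t ∈ Set.Icc t' z0, y0 - 2*(z0 - t) ≤ t - c/t ∧ t - c/t ≤ y0 := by
    rintro t ⟨hta, htb⟩
    exact wboundsB c t y0 z0 (by rw [ht'] at hta; linarith) hc htb
      (by rw [ht'] at hta; linarith) (by rw [ht'] at hta; linarith)
  have hB : ∀ t ∈ Set.Icc t' z0, 3*t^2 - c + (t^3 - c*t) * (-(c/t^2) - 2) < 0 := by
    rintro t ⟨hta, htb⟩
    have ht0 : 0 < t := by rw [ht'] at hta; linarith
    obtain ⟨hwa, hwb'⟩ := hwb t ⟨hta, htb⟩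
    have hid : 3*t^2 - c + (t^3 - c*t) * (-(c/t^2) - 2)
        = t * ((3/2 - t)*(3*(t - c/t) - 2) + (3/2 - (t - c/t))*(2 - (t - c/t))) := by
      field_simp
      ring
    rw [hid]
    refine mul_neg_of_pos_of_neg ht0 (EnegB y0 z0 t (t - c/t) hyB hy2 hzB hz2 ?_ htb hwa hwb')
    rw [← hε, ← ht']; exact hta
  have hφ := phiA_lt_of_neg c t' z0 (by rw [ht']; linarith) (by rw [ht']; linarith) hB
  obtain ⟨ha1', ha2'⟩ := hwb t' ⟨le_refl _, by rw [ht']; linarith⟩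
  have ht'0 : (0:ℝ) < t' := by rw [ht']; linarith
  have hz00 : z0 ≠ 0 := by intro h; rw [h] at hz1; linarith
  have ht'ne : t' ≠ 0 := ne_of_gt ht'0
  have eq1 : phiA c z0 = z0^2 * y0 * Real.exp (-z0 - y0) := by
    unfold phiA
    have h1 : z0^3 - c*z0 = z0^2 * y0 := by rw [hc]; ring
    have h2 : c/z0 - 2*z0 = -z0 - y0 := by rw [hc]; field_simp; ring
    rw [h1, h2]
  have eq2 : phiA c t' = t'^2 * (t' - c/t') * Real.exp (-t' - (t' - c/t')) := by
    unfold phiA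
    have h1 : t'^3 - c*t' = t'^2 * (t' - c/t') := by field_simp
    have h2 : c/t' - 2*t' = -t' - (t' - c/t') := by ring
    rw [h1, h2]
  refine no_improve m y z hy hz hsum hmax i (t' - c/t') t'
    (by rw [ht'] at ha1' ⊢; linarith) (by linarith) (by rw [ht']; linarith)
    (by rw [ht']; linarith) ?_ ?_
  · rw [← hc]
    field_simp
    ring
  · rw [← hy0def, ← hz0def, ← eq1, ← eq2] at *
    exact hφ

/-- Claim (case 1 of Claim A). If `(y, z)` maximises `Σ z_i²·y_i·e^{−z_i−y_i}` over all
tuples with `1 ≤ y_i, z_i ≤ 2` and `Σ z_i² = Σ y_i·z_i`, then for every `i` either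
`y_i = z_i = 3/2`, or `y_i < 3/2 < z_i`, or `z_i ≤ 3/2 < y_i`. -/
theorem programA_case1 (m : ℕ) (hm : 0 < m) (y z : Fin m → ℝ)
    (hy : ∀ i, 1 ≤ y i ∧ y i ≤ 2) (hz : ∀ i, 1 ≤ z i ∧ z i ≤ 2)
    (hsum : ∑ i, (z i) ^ 2 = ∑ i, y i * z i)
    (hmax : ∀ y' z' : Fin m → ℝ, (∀ i, 1 ≤ y' i ∧ y' i ≤ 2) → (∀ i, 1 ≤ z' i ∧ z' i ≤ 2) →
      (∑ i, (z' i) ^ 2 = ∑ i, y' i * z' i) →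
      ∑ i, (z' i) ^ 2 * y' i * Real.exp (-(z' i) - y' i) ≤
        ∑ i, (z i) ^ 2 * y i * Real.exp (-(z i) - y i)) :
    ∀ i, (y i = 3 / 2 ∧ z i = 3 / 2) ∨ (y i < 3 / 2 ∧ 3 / 2 < z i) ∨
      (z i ≤ 3 / 2 ∧ 3 / 2 < y i) := by
  intro i
  by_contra hcon
  push_neg at hcon
  obtain ⟨h1, h2, h3⟩ := hcon
  rcases lt_trichotomy (y i) (3/2) with hy3 | hy3 | hy3
  · have hzle : z i ≤ 3/2 := h2 hy3
    exact regionA m y z hy hz hsum hmax i hy3.le hzle (by linarith)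
  · have hzne : z i ≠ 3/2 := h1 hy3
    rcases lt_or_gt_of_ne hzne with hzlt | hzgt
    · exact regionA m y z hy hz hsum hmax i hy3.le hzlt.le (by linarith)
    · exact regionB m y z hy hz hsum hmax i hy3.ge hzgt
  · have hzgt : 3/2 < z i := by
      by_contra hle
      push_neg at hle
      exact absurd hy3 (not_lt.mpr (h3 hle))
    exact regionB m y z hy hz hsum hmax i hy3.le hzgt
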